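/- If B ⊂ R^m is a signature Gröbner basis for I = ⟨f_1,...,f_m⟩ (i.e., every nonzero α ∈ R^m s-reduces to zero w.r.t. B), then the set of images π(B) = { π(α) : α ∈ B } is a Gröbner basis for I: the leading terms of π(B) generate the leading ideal of I. -/

import Mathlib

open MvPolynomial
open scoped MonomialOrder

namespace GB

variable {σ K : Type*} [Field K]

/-- The leading monomial (exponent vector) of `p` with respect to the monomial order `m`. -/
noncomputable def lm (m : MonomialOrder σ) (p : MvPolynomial σ K) : σ →₀ ℕ :=
  m.toSyn.symm (p.support.sup m.toSyn)

/-- The leading coefficient of `p` with respect to `m`. -/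
noncomputable def lc (m : MonomialOrder σ) (p : MvPolynomial σ K) : K :=
  p.coeff (lm m p)

/-- The leading term of `p` with respect to `m`. -/
noncomputable def lt (m : MonomialOrder σ) (p : MvPolynomial σ K) : MvPolynomial σ K :=
  monomial (lm m p) (lc m p)

/-- The (monic) least common multiple of two monomials, as pointwise sup of exponents. -/
noncomputable def mlcm (a b : σ →₀ ℕ) : σ →₀ ℕ := a ⊔ b

/-- The S-polynomial `S(f,g) = (λ/lt f)·f − (λ/lt g)·g` where `λ = lcm(lm f, lm g)`. -/
noncomputable def sPoly (m : MonomialOrder σ) (f g : MvPolynomial σ K) : MvPolynomial σ K :=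
  monomial (mlcm (lm m f) (lm m g) - lm m f) (lc m f)⁻¹ * f
    - monomial (mlcm (lm m f) (lm m g) - lm m g) (lc m g)⁻¹ * g

variable {n : ℕ}

/-- The map `π : R^n → R`, `α ↦ Σ αᵢ fᵢ`, determined by the input polynomials `F`. -/
noncomputable def piMap (F α : Fin n → MvPolynomial σ K) : MvPolynomial σ K :=
  ∑ i, α i * F i

/-- The `i`-th standard basis vector of `R^n`. -/
noncomputable def eV (i : Fin n) : Fin n → MvPolynomial σ K :=
  fun k => if k = i then 1 else 0

/-- Scalar multiplication of a module element by the monomial with exponent `a` and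
coefficient `c`. -/
noncomputable def mulV (a : σ →₀ ℕ) (c : K) (α : Fin n → MvPolynomial σ K) :
    Fin n → MvPolynomial σ K :=
  fun i => monomial a c * α i

/-- The S-pair `spair(α,β) = (λ/lt(πα))·α − (λ/lt(πβ))·β`, `λ = lcm(lm(πα), lm(πβ))`. -/
noncomputable def spair (m : MonomialOrder σ) (F α β : Fin n → MvPolynomial σ K) :
    Fin n → MvPolynomial σ K :=
  fun i =>
    monomial (mlcm (lm m (piMap F α)) (lm m (piMap F β)) - lm m (piMap F α))
        (lc m (piMap F α))⁻¹ * α i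
      - monomial (mlcm (lm m (piMap F α)) (lm m (piMap F β)) - lm m (piMap F β))
        (lc m (piMap F β))⁻¹ * β i

/-- A module monomial order on the module monomials `a·eᵢ` of `R^n` (encoded as pairs `(a,i)`),
compatible with the monomial order `m`: a well-founded linear order, compatible with monomial
multiplication, such that `a ≼[m] b` iff `a·eᵢ ≤ b·eᵢ` for all `i`. -/
structure ModOrder (σ : Type*) (n : ℕ) (m : MonomialOrder σ) where
  /-- the synonym type carrying the order -/
  syn : Type*
  /-- `syn` is linearly ordered -/
  lin : LinearOrder syn := by infer_instance
  /-- identification of module monomials with `syn` -/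
  toSyn : ((σ →₀ ℕ) × Fin n) ≃ syn
  /-- the order is a well-order -/
  wf : WellFounded fun x y : syn => x < y
  /-- compatibility with monomial multiplication -/
  smul_compat : ∀ (c : σ →₀ ℕ) (S T : (σ →₀ ℕ) × Fin n),
    toSyn S ≤ toSyn T → toSyn (c + S.1, S.2) ≤ toSyn (c + T.1, T.2)
  /-- compatibility with the monomial order `m` -/
  compat : ∀ (a b : σ →₀ ℕ) (i : Fin n), toSyn (a, i) ≤ toSyn (b, i) ↔ a ≼[m] b

attribute [instance] ModOrder.lin

/-- The set of module terms (module monomials with nonzero coefficient) of `α ∈ R^n`. -/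
noncomputable def msupport (α : Fin n → MvPolynomial σ K) : Finset ((σ →₀ ℕ) × Fin n) := by
  classical
  exact Finset.univ.biUnion fun i => (α i).support.image fun a => (a, i)

/-- The signature of `α`: its maximal module term w.r.t. `mo` (`⊥` for `α = 0`). -/
noncomputable def sig {m : MonomialOrder σ} (mo : ModOrder σ n m)
    (α : Fin n → MvPolynomial σ K) : WithBot mo.syn :=
  ((msupport α).image mo.toSyn).max

/-- `T` is the signature of `α` (as a module monomial). -/
def IsSigMon {m : MonomialOrder σ} (mo : ModOrder σ n m)
    (α : Fin n → MvPolynomial σ K) (T : (σ →₀ ℕ) × Fin n) : Prop :=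
  sig mo α = (mo.toSyn T : WithBot mo.syn)

/-- One 𝔰-reduction step of `α` by some `β ∈ B`: a monomial multiple `b·β` whose polynomial
lead term equals (and cancels) a term of `π α` and with `s(b·β) ≤ s(α)` is subtracted. -/
def SRedStep (m : MonomialOrder σ) (mo : ModOrder σ n m) (F : Fin n → MvPolynomial σ K)
    (B : Set (Fin n → MvPolynomial σ K)) (α α' : Fin n → MvPolynomial σ K) : Prop :=
  ∃ β ∈ B, ∃ (a : σ →₀ ℕ) (c : K), c ≠ 0 ∧ piMap F β ≠ 0 ∧
    (a + lm m (piMap F β)) ∈ (piMap F α).support ∧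
    c * lc m (piMap F β) = (piMap F α).coeff (a + lm m (piMap F β)) ∧
    sig mo (mulV a c β) ≤ sig mo α ∧
    α' = fun i => α i - monomial a c * β i

/-- A regular 𝔰-reduction step: as `SRedStep`, but with `s(b·β) < s(α)`. -/
def RegSRedStep (m : MonomialOrder σ) (mo : ModOrder σ n m) (F : Fin n → MvPolynomial σ K)
    (B : Set (Fin n → MvPolynomial σ K)) (α α' : Fin n → MvPolynomial σ K) : Prop :=
  ∃ β ∈ B, ∃ (a : σ →₀ ℕ) (c : K), c ≠ 0 ∧ piMap F β ≠ 0 ∧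
    (a + lm m (piMap F β)) ∈ (piMap F α).support ∧
    c * lc m (piMap F β) = (piMap F α).coeff (a + lm m (piMap F β)) ∧
    sig mo (mulV a c β) < sig mo α ∧
    α' = fun i => α i - monomial a c * β i

/-- `α` 𝔰-reduces to zero w.r.t. `B`: a chain of 𝔰-reduction steps reaches a syzygy. -/
def SRedToZero (m : MonomialOrder σ) (mo : ModOrder σ n m) (F : Fin n → MvPolynomial σ K)
    (B : Set (Fin n → MvPolynomial σ K)) (α : Fin n → MvPolynomial σ K) : Prop :=
  ∃ γ, Relation.ReflTransGen (SRedStep m mo F B) α γ ∧ piMap F γ = 0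

/-- `α` regular 𝔰-reduces to zero w.r.t. `B`: a chain of regular 𝔰-reduction steps reaches
a syzygy. -/
def RegSRedToZero (m : MonomialOrder σ) (mo : ModOrder σ n m) (F : Fin n → MvPolynomial σ K)
    (B : Set (Fin n → MvPolynomial σ K)) (α : Fin n → MvPolynomial σ K) : Prop :=
  ∃ γ, Relation.ReflTransGen (RegSRedStep m mo F B) α γ ∧ piMap F γ = 0

/-- `B` is a signature Gröbner basis up to signature `T`: every `γ` with `s(γ) < T`
𝔰-reduces to zero w.r.t. `B`. -/
def SigGBUpTo (m : MonomialOrder σ) (mo : ModOrder σ n m) (F : Fin n → MvPolynomial σ K)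
    (B : Set (Fin n → MvPolynomial σ K)) (T : WithBot mo.syn) : Prop :=
  ∀ γ : Fin n → MvPolynomial σ K, sig mo γ < T → SRedToZero m mo F B γ

lemma toSyn_lm (m : MonomialOrder σ) (p : MvPolynomial σ K) :
    m.toSyn (lm m p) = p.support.sup m.toSyn := by
  simp [lm]

lemma lm_mem {m : MonomialOrder σ} {p : MvPolynomial σ K} (hp : p ≠ 0) :
    lm m p ∈ p.support := by
  obtain ⟨b, hb, he⟩ := Finset.exists_mem_eq_sup p.support
    (by rwa [Finset.nonempty_iff_ne_empty, Ne, MvPolynomial.support_eq_empty]) m.toSyn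
  have : lm m p = b := by simp [lm, he]
  rwa [this]

lemma le_lm {m : MonomialOrder σ} {p : MvPolynomial σ K} {b : σ →₀ ℕ}
    (hb : b ∈ p.support) : m.toSyn b ≤ m.toSyn (lm m p) := by
  rw [toSyn_lm]; exact Finset.le_sup hb

lemma coeff_eq_zero_of_lt {m : MonomialOrder σ} {p : MvPolynomial σ K} {b : σ →₀ ℕ}
    (hb : m.toSyn (lm m p) < m.toSyn b) : p.coeff b = 0 := by
  by_contra h
  exact absurd (le_lm (by simpa [mem_support_iff] using h)) (not_le.mpr hb)

lemma lc_ne_zero {m : MonomialOrder σ} {p : MvPolynomial σ K} (hp : p ≠ 0) :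
    lc m p ≠ 0 := by
  simpa [lc, mem_support_iff] using lm_mem (m := m) hp

lemma lm_monomial_mul {m : MonomialOrder σ} {a : σ →₀ ℕ} {c : K} (hc : c ≠ 0)
    {q : MvPolynomial σ K} (hq : q ≠ 0) :
    lm m (monomial a c * q) = a + lm m q := by
  classical
  apply m.toSyn.injective
  apply le_antisymm
  · rw [toSyn_lm]
    apply Finset.sup_le
    intro b hb
    have hmem := MvPolynomial.support_mul (monomial a c) q hb
    rw [Finset.mem_add] at hmem
    obtain ⟨u, hu, v, hv, rfl⟩ := hmem
    have hu' : u = a := by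
      have := MvPolynomial.support_monomial_subset hu
      simpa using this
    subst hu'
    rw [map_add, map_add]
    exact add_le_add le_rfl (le_lm hv)
  · apply le_lm
    rw [mem_support_iff, MvPolynomial.coeff_monomial_mul]
    exact mul_ne_zero hc (lc_ne_zero hq)

lemma lm_sub_eq {m : MonomialOrder σ} {p q : MvPolynomial σ K} (hp : p ≠ 0)
    (h : m.toSyn (lm m q) < m.toSyn (lm m p)) :
    p - q ≠ 0 ∧ lm m (p - q) = lm m p := by
  classical
  have hcoeff : (p - q).coeff (lm m p) = lc m p := by
    rw [MvPolynomial.coeff_sub, coeff_eq_zero_of_lt h, sub_zero]; rfl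
  have hne : p - q ≠ 0 := by
    intro h0
    rw [h0, MvPolynomial.coeff_zero] at hcoeff
    exact lc_ne_zero hp hcoeff.symm
  refine ⟨hne, m.toSyn.injective (le_antisymm ?_ ?_)⟩
  · rw [toSyn_lm (p := p - q)]
    apply Finset.sup_le
    intro b hb
    have := MvPolynomial.support_sub σ p q hb
    rw [Finset.mem_union] at this
    rcases this with hb' | hb'
    · exact le_lm hb'
    · exact (le_lm hb').trans h.le
  · exact le_lm (by rw [mem_support_iff, hcoeff]; exact lc_ne_zero hp)

lemma piMap_sub (F α β : Fin n → MvPolynomial σ K) (a : σ →₀ ℕ) (c : K) :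
    piMap F (fun i => α i - monomial a c * β i)
      = piMap F α - monomial a c * piMap F β := by
  simp [piMap, sub_mul, Finset.sum_sub_distrib, Finset.mul_sum, mul_assoc]

lemma key_chain (m : MonomialOrder σ) (mo : ModOrder σ n m)
    (F : Fin n → MvPolynomial σ K) (B : Set (Fin n → MvPolynomial σ K))
    {α γ : Fin n → MvPolynomial σ K} (hγ : piMap F γ = 0)
    (h : Relation.ReflTransGen (SRedStep m mo F B) α γ) :
    piMap F α ≠ 0 →
      ∃ β ∈ B, piMap F β ≠ 0 ∧ ∃ a, lm m (piMap F α) = a + lm m (piMap F β) := by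
  induction h using Relation.ReflTransGen.head_induction_on with
  | refl => intro hne; exact absurd hγ hne
  | @head α₀ α₁ step chain ih =>
    intro hα
    obtain ⟨β, hβB, a, c, hc, hπβ, hmem, hcoeff, hsig, hα'⟩ := step
    by_cases he : a + lm m (piMap F β) = lm m (piMap F α₀)
    · exact ⟨β, hβB, hπβ, a, he.symm⟩
    · have hlt : m.toSyn (a + lm m (piMap F β)) < m.toSyn (lm m (piMap F α₀)) :=
        lt_of_le_of_ne (le_lm hmem) (fun h => he (m.toSyn.injective h))
      have hq : m.toSyn (lm m (monomial a c * piMap F β))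
          < m.toSyn (lm m (piMap F α₀)) := by
        rw [lm_monomial_mul hc hπβ]; exact hlt
      have hsub := lm_sub_eq hα hq
      have hπα' : piMap F α₁ = piMap F α₀ - monomial a c * piMap F β := by
        rw [hα', piMap_sub]
      obtain ⟨β', hβ'B, hπβ', a', ha'⟩ := ih (by rw [hπα']; exact hsub.1)
      rw [hπα', hsub.2] at ha'
      exact ⟨β', hβ'B, hπβ', a', ha'⟩

/-- If `B` is a (finite) signature Gröbner basis for `I = ⟨f₁,...,f_n⟩` — every nonzero
`α ∈ R^n` 𝔰-reduces to zero w.r.t. `B` — then `π(B)` is a Gröbner basis for `I`: the leading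
terms of the elements of `π(B)` generate the leading ideal of `I`. -/
theorem sigGB_is_GB (m : MonomialOrder σ) (mo : ModOrder σ n m)
    (F : Fin n → MvPolynomial σ K) (B : Set (Fin n → MvPolynomial σ K)) (hBfin : B.Finite)
    (hB : ∀ α : Fin n → MvPolynomial σ K, α ≠ 0 → SRedToZero m mo F B α) :
    Ideal.span {q : MvPolynomial σ K | ∃ α ∈ B, piMap F α ≠ 0 ∧ q = lt m (piMap F α)} =
      Ideal.span {q : MvPolynomial σ K |
        ∃ p ∈ Ideal.span (Set.range F), p ≠ 0 ∧ q = lt m p} := by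
  apply le_antisymm
  · apply Ideal.span_mono
    rintro q ⟨α, hαB, hπα, rfl⟩
    refine ⟨piMap F α, ?_, hπα, rfl⟩
    apply Ideal.sum_mem
    intro i _
    exact Ideal.mul_mem_left _ _ (Ideal.subset_span ⟨i, rfl⟩)
  · rw [Ideal.span_le]
    rintro q ⟨p, hp, hpne, rfl⟩
    obtain ⟨α, hα⟩ := Ideal.mem_span_range_iff_exists_fun.mp hp
    have hπα : piMap F α = p := by simpa [piMap, smul_eq_mul] using hα
    have hα0 : α ≠ 0 := by
      rintro rfl
      apply hpne
      rw [← hπα]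
      simp [piMap]
    obtain ⟨γ, hchain, hγ⟩ := hB α hα0
    obtain ⟨β, hβB, hπβ, a, ha⟩ :=
      key_chain m mo F B hγ hchain (by rw [hπα]; exact hpne)
    rw [hπα] at ha
    have hlt : lt m p = monomial a (lc m p * (lc m (piMap F β))⁻¹) * lt m (piMap F β) := by
      rw [lt, lt, MvPolynomial.monomial_mul, ha,
        inv_mul_cancel_right₀ (lc_ne_zero hπβ)]
    rw [hlt]
    exact Ideal.mul_mem_left _ _ (Ideal.subset_span ⟨β, hβB, hπβ, rfl⟩)

end GB
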